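/- arXiv:2201.04077 — 3 statements merged into one kernel-verified Lean document; each statement's English description precedes it below -/
import Mathlib

section
/- Let f : ℝ → SL(2,ℝ) be a one-parameter subgroup whose range has non-compact closure in SL(2,ℝ). Then there exist g ∈ SL(2,ℝ) and a real number c with c ≠ 0 and c ≠ 1 such that g · f(t) · g⁻¹ = f(c t) for all t ∈ ℝ; moreover, any such g does not belong to the range of f. In particular, every non-compact one-parameter subgroup of SL(2,ℝ) has non-trivial normalizer. -/
/-- The topology on `SL(2, ℝ)` induced from the space of 2×2 real matrices. -/
instance : TopologicalSpace (Matrix.SpecialLinearGroup (Fin 2) ℝ) :=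
  TopologicalSpace.induced (fun g => (g : Matrix (Fin 2) (Fin 2) ℝ)) inferInstance

namespace OPSAux

open Matrix

abbrev M2 := Matrix (Fin 2) (Fin 2) ℝ
abbrev SL2 := Matrix.SpecialLinearGroup (Fin 2) ℝ

lemma exists_entries (A : M2) : ∃ a b c d : ℝ, A = !![a,b;c,d] :=
  ⟨_,_,_,_, eta_fin_two A⟩

/-- explicit inverse of a det-1 matrix -/
noncomputable def slinv (P : M2) : M2 := !![P 1 1, -(P 0 1); -(P 1 0), P 0 0]

lemma mul_slinv (P : M2) (h : P.det = 1) : P * slinv P = 1 := by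
  rw [det_fin_two] at h
  rw [eta_fin_two P, slinv]
  ext i j
  fin_cases i <;> fin_cases j <;>
    simp [Matrix.mul_apply, Fin.sum_univ_two] <;> linarith

lemma slinv_mul (P : M2) (h : P.det = 1) : slinv P * P = 1 := by
  rw [det_fin_two] at h
  rw [eta_fin_two P, slinv]
  ext i j
  fin_cases i <;> fin_cases j <;>
    simp [Matrix.mul_apply, Fin.sum_univ_two] <;> linarith

/-- Cayley–Hamilton, factored form, for 2×2 real matrices. -/
lemma ch2 (A : M2) (l m : ℝ) (htr : A 0 0 + A 1 1 = l + m)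
    (hdet : A.det = l * m) :
    (A - l • 1) * (A - m • 1) = 0 ∧ (A - m • 1) * (A - l • 1) = 0 := by
  obtain ⟨a,b,c,d,rfl⟩ := exists_entries A
  simp [det_fin_two] at htr hdet
  have hm : m = a + d - l := by linarith
  subst hm
  constructor <;>
  · ext i j
    fin_cases i <;> fin_cases j <;>
      simp [Matrix.mul_apply, Fin.sum_univ_two, Matrix.one_apply] <;>
      first | ring1 | linear_combination -hdet

/-- a matrix commuting with a diagonal matrix with distinct entries is diagonal -/
lemma comm_diag (X : M2) (l m : ℝ) (hne : l ≠ m)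
    (h : X * !![l,0;0,m] = !![l,0;0,m] * X) : X = !![X 0 0, 0; 0, X 1 1] := by
  have h01 : X 0 1 * m = l * X 0 1 := by
    have := congrFun (congrFun h 0) 1
    simpa [Matrix.mul_apply, Fin.sum_univ_two] using this
  have h10 : X 1 0 * l = m * X 1 0 := by
    have := congrFun (congrFun h 1) 0
    simpa [Matrix.mul_apply, Fin.sum_univ_two] using this
  have e1 : X 0 1 = 0 := by
    rcases mul_eq_zero.1 (show (l - m) * X 0 1 = 0 by linarith [h01]) with h' | h'
    · exact absurd (by linarith : l = m) hne
    · exact h'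
  have e2 : X 1 0 = 0 := by
    rcases mul_eq_zero.1 (show (l - m) * X 1 0 = 0 by linarith [h10]) with h' | h'
    · exact absurd (by linarith : l = m) hne
    · exact h'
  ext i j
  fin_cases i <;> fin_cases j <;> simp [e1, e2]

/-- a matrix commuting with a nonzero strictly upper triangular matrix -/
lemma comm_nilp (X : M2) (b : ℝ) (hb : b ≠ 0)
    (h : X * !![0,b;0,0] = !![0,b;0,0] * X) : X = !![X 0 0, X 0 1; 0, X 0 0] := by
  have h00 : (0:ℝ) = b * X 1 0 := by
    have := congrFun (congrFun h 0) 0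
    simpa [Matrix.mul_apply, Fin.sum_univ_two] using this
  have h01 : X 0 0 * b = b * X 1 1 := by
    have := congrFun (congrFun h 0) 1
    simpa [Matrix.mul_apply, Fin.sum_univ_two] using this
  have e1 : X 1 0 = 0 := by
    rcases mul_eq_zero.1 h00.symm with h' | h'
    · exact absurd h' hb
    · exact h'
  have e2 : X 1 1 = X 0 0 := by
    have := mul_left_cancel₀ hb (show b * X 1 1 = b * X 0 0 by linarith [h01])
    linarith
  ext i j
  fin_cases i <;> fin_cases j <;> simp [e1, e2]

lemma build_P (a b c d l m u0 u1 v0 v1 : ℝ) (hne : l ≠ m)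
    (hu : ¬(u0 = 0 ∧ u1 = 0)) (hv : ¬(v0 = 0 ∧ v1 = 0))
    (hu1 : a*u0 + b*u1 = l*u0) (hu2 : c*u0 + d*u1 = l*u1)
    (hv1 : a*v0 + b*v1 = m*v0) (hv2 : c*v0 + d*v1 = m*v1) :
    ∃ P : M2, P.det = 1 ∧ !![a,b;c,d] * P = P * !![l,0;0,m] := by
  have hdd : u0*v1 - u1*v0 ≠ 0 := by
    intro hdd
    obtain ⟨s, hs0, hs1⟩ : ∃ s, v0 = s*u0 ∧ v1 = s*u1 := by
      rcases not_and_or.1 hu with h | h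
      · exact ⟨v0/u0, by field_simp, by field_simp; nlinarith [hdd]⟩
      · exact ⟨v1/u1, by field_simp; nlinarith [hdd], by field_simp⟩
    subst hs0; subst hs1
    have e0 : (l - m) * (s*u0) = 0 := by linear_combination hv1 - s*hu1
    have e1 : (l - m) * (s*u1) = 0 := by linear_combination hv2 - s*hu2
    have hlm : l - m ≠ 0 := sub_ne_zero.2 hne
    exact hv ⟨by rcases mul_eq_zero.1 e0 with h|h; exact absurd h hlm; exact h,
              by rcases mul_eq_zero.1 e1 with h|h; exact absurd h hlm; exact h⟩
  have hdd' : u0 * v1 - v0 * u1 ≠ 0 := by rwa [mul_comm v0 u1]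
  refine ⟨!![u0, v0/(u0*v1 - u1*v0); u1, v1/(u0*v1 - u1*v0)], ?_, ?_⟩
  · rw [det_fin_two_of]; field_simp
  · ext i j
    fin_cases i <;> fin_cases j <;>
      simp [Matrix.mul_apply, Fin.sum_univ_two] <;>
      first
      | linarith [hu1, hu2]
      | (field_simp; linarith [hv1, hv2])

lemma prod_zero_entries (a b c d l m : ℝ)
    (h : (!![a,b;c,d] - l • (1:M2)) * (!![a,b;c,d] - m • 1) = 0) :
    (a - l)*(a-m) + b*c = 0 ∧ (a-l)*b + b*(d-m) = 0 ∧
    c*(a-m) + (d-l)*c = 0 ∧ c*b + (d-l)*(d-m) = 0 := by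
  refine ⟨?_, ?_, ?_, ?_⟩
  · have := congrFun (congrFun h 0) 0
    simp [Matrix.mul_apply, Fin.sum_univ_two, Matrix.one_apply] at this
    linarith
  · have := congrFun (congrFun h 0) 1
    simp [Matrix.mul_apply, Fin.sum_univ_two, Matrix.one_apply] at this
    linarith
  · have := congrFun (congrFun h 1) 0
    simp [Matrix.mul_apply, Fin.sum_univ_two, Matrix.one_apply] at this
    linarith
  · have := congrFun (congrFun h 1) 1
    simp [Matrix.mul_apply, Fin.sum_univ_two, Matrix.one_apply] at this
    linarith

lemma eigcol (a b c d l m : ℝ) (hne : l ≠ m) (htr : a + d = l + m)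
    (h : (!![a,b;c,d] - l • (1:M2)) * (!![a,b;c,d] - m • 1) = 0) :
    ∃ u0 u1 : ℝ, ¬(u0 = 0 ∧ u1 = 0) ∧ a*u0 + b*u1 = l*u0 ∧ c*u0 + d*u1 = l*u1 := by
  obtain ⟨e00, e01, e10, e11⟩ := prod_zero_entries a b c d l m h
  by_cases hc : a - m = 0 ∧ c = 0
  · refine ⟨b, d - m, ?_, by linear_combination e01, by linear_combination e11⟩
    rintro ⟨hb, hdm⟩
    exact hne (by linarith [hc.1, hc.2])
  · exact ⟨a - m, c, hc, by linear_combination e00, by linear_combination e10⟩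

lemma swap_key (x0 x1 y0 y1 : ℝ) (hdet : x0*x1 = 1) (hinv0 : y0*x0 = 1)
    (hinv1 : y1*x1 = 1) :
    !![0,(1:ℝ);-1,0] * !![x0,0;0,x1] = !![y0,0;0,y1] * !![0,1;-1,0] := by
  have h0 : y0 = x1 := by linear_combination x1*hinv0 - y0*hdet
  have h1 : y1 = x0 := by linear_combination x0*hinv1 - y1*hdet
  subst h0; subst h1
  ext i j
  fin_cases i <;> fin_cases j <;>
    simp [Matrix.mul_apply, Fin.sum_univ_two]

/-- packaging the conjugation into SL(2,ℝ) -/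
lemma conj_pack (f : ℝ → SL2) (P W Q : M2) (hP : P.det = 1) (hW : W.det = 1)
    (hPQ : P * Q = 1) (c : ℝ)
    (key : ∀ t : ℝ, W * (Q * ((f t : M2)) * P) = (Q * ((f (c*t) : M2)) * P) * W) :
    ∃ g : SL2, ∀ t : ℝ, g * f t * g⁻¹ = f (c*t) := by
  set P' : SL2 := ⟨P, hP⟩ with hP'
  set W' : SL2 := ⟨W, hW⟩ with hW'
  have hQcoe : ((P'⁻¹ : SL2) : M2) = Q := by
    have h1 : ((P'⁻¹ : SL2) : M2) * P = 1 := by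
      have := Matrix.SpecialLinearGroup.coe_mul (P'⁻¹) P'
      rw [inv_mul_cancel] at this
      simpa using this.symm
    calc ((P'⁻¹ : SL2) : M2) = ((P'⁻¹ : SL2) : M2) * (P * Q) := by rw [hPQ, mul_one]
      _ = Q := by rw [← mul_assoc, h1, one_mul]
  refine ⟨P' * W' * P'⁻¹, fun t => ?_⟩
  have keySL : W' * (P'⁻¹ * f t * P') = (P'⁻¹ * f (c*t) * P') * W' := by
    apply Subtype.coe_injective
    simpa [Matrix.SpecialLinearGroup.coe_mul, hQcoe] using key t
  have e1 : P' * W' * P'⁻¹ * f t * (P' * W' * P'⁻¹)⁻¹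
      = P' * (W' * (P'⁻¹ * f t * P')) * W'⁻¹ * P'⁻¹ := by group
  rw [e1, keySL]
  group

/-- matrix core of the hyperbolic case -/
lemma caseA_core (X : ℝ → M2) (l m : ℝ) (hne : l ≠ m)
    (hdiag : ∀ t, X t * !![l,0;0,m] = !![l,0;0,m] * X t)
    (hdet : ∀ t, (X t).det = 1)
    (hinv : ∀ t, X (-t) * X t = 1) :
    ∀ t, !![0,(1:ℝ);-1,0] * X t = X (-t) * !![0,(1:ℝ);-1,0] := by
  intro t
  have hXt := comm_diag (X t) l m hne (hdiag t)
  have hXnt := comm_diag (X (-t)) l m hne (hdiag (-t))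
  have hdt : X t 0 0 * X t 1 1 = 1 := by
    have := hdet t
    rw [hXt, det_fin_two_of] at this
    linarith
  have hpr := hinv t
  rw [hXt, hXnt] at hpr ⊢
  have h0 : X (-t) 0 0 * X t 0 0 = 1 := by
    have := congrFun (congrFun hpr 0) 0
    simpa [Matrix.mul_apply, Fin.sum_univ_two, Matrix.one_apply] using this
  have h1 : X (-t) 1 1 * X t 1 1 = 1 := by
    have := congrFun (congrFun hpr 1) 1
    simpa [Matrix.mul_apply, Fin.sum_univ_two, Matrix.one_apply] using this
  exact swap_key _ _ _ _ hdt h0 h1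

/-- matrix core of the parabolic case -/
lemma caseC_core (X : ℝ → M2) (hform : ∀ t, X t = !![1, X t 0 1; 0, 1])
    (hins : ∀ s t, X s * X t = X (s+t)) :
    ∀ t : ℝ, !![(2:ℝ),0;0,1/2] * X t = X (4*t) * !![(2:ℝ),0;0,1/2] := by
  intro t
  have h4 : X (4*t) = !![1, 4 * X t 0 1; 0, 1] := by
    rw [show (4:ℝ)*t = (t+t)+(t+t) by ring, ← hins (t+t) (t+t), ← hins t t,
      hform t]
    ext i j
    fin_cases i <;> fin_cases j <;>
      simp [Matrix.mul_apply, Fin.sum_univ_two] <;> ring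
  rw [hform t, h4]
  ext i j
  fin_cases i <;> fin_cases j <;>
    simp [Matrix.mul_apply, Fin.sum_univ_two] <;> ring

/-- construct a basis putting a nonzero square-zero matrix in upper triangular form -/
lemma build_P_nilp (N : M2) (hN : N ≠ 0) (hsq : N * N = 0) :
    ∃ (P : M2) (bb : ℝ), bb ≠ 0 ∧ P.det = 1 ∧ N * P = P * !![0,bb;0,0] := by
  obtain ⟨a,b,c,d,rfl⟩ := exists_entries N
  have e00 : a*a + b*c = 0 := by
    have := congrFun (congrFun hsq 0) 0
    simpa [Matrix.mul_apply, Fin.sum_univ_two] using this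
  have e10 : c*a + d*c = 0 := by
    have := congrFun (congrFun hsq 1) 0
    simpa [Matrix.mul_apply, Fin.sum_univ_two] using this
  have e11 : c*b + d*d = 0 := by
    have := congrFun (congrFun hsq 1) 1
    simpa [Matrix.mul_apply, Fin.sum_univ_two] using this
  by_cases hc : c = 0
  · -- then a = 0 and d = 0, so N = !![0,b;0,0] with b ≠ 0
    have ha : a = 0 := by
      have : a*a = 0 := by rw [hc] at e00; linarith
      exact mul_self_eq_zero.mp this
    have hd : d = 0 := by
      have : d*d = 0 := by rw [hc] at e11; linarith
      exact mul_self_eq_zero.mp this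
    subst ha; subst hd; subst hc
    have hb : b ≠ 0 := by
      intro hb; subst hb
      exact hN (by ext i j; fin_cases i <;> fin_cases j <;> simp)
    exact ⟨1, b, hb, det_one, by rw [mul_one, one_mul]⟩
  · -- c ≠ 0 : columns (a,c) is in the kernel; use v = e₀
    refine ⟨!![a, 1/(-c); c, 0], -1/c, by simp [hc], by rw [det_fin_two_of]; field_simp; ring, ?_⟩
    ext i j
    fin_cases i <;> fin_cases j <;>
      simp [Matrix.mul_apply, Fin.sum_univ_two] <;>
      first | linarith [e00, e10] | ring1 | field_simp

lemma ellipse_scalar (β m x y : ℝ) (hmpos : 0 < m)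
    (h : x^2 - β*x*y + ((β^2+m)/4)*y^2 = 1) :
    y^2 * m ≤ 4 ∧ x^2 * m ≤ 2*m + 2*β^2 := by
  have hsq : (2*x - β*y)^2 = 4 - m*y^2 := by linear_combination 4*h
  have hy : y^2*m ≤ 4 := by nlinarith [sq_nonneg (2*x - β*y)]
  refine ⟨hy, ?_⟩
  have hstar : 4*x^2 ≤ 8 + 2*β^2*y^2 - 2*m*y^2 := by
    nlinarith [sq_nonneg (2*x - 2*β*y), hsq]
  nlinarith [mul_le_mul_of_nonneg_left hy (sq_nonneg β),
    mul_le_mul_of_nonneg_left hstar (le_of_lt hmpos), sq_nonneg (m*y)]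

end OPSAux

/-- Every non-compact one-parameter subgroup `f` of `SL(2, ℝ)` is
conjugated to a nontrivial linear time change of itself by some `g ∈ SL(2, ℝ)`;
moreover, any such `g` lies outside the range of `f`. In particular, every non-compact
one-parameter subgroup of `SL(2, ℝ)` has non-trivial normalizer. -/
theorem noncompact_one_param_subgroup_nontrivial_normalizer
    (f : ℝ → Matrix.SpecialLinearGroup (Fin 2) ℝ)
    (hcont : Continuous f) (hhom : ∀ s t : ℝ, f (s + t) = f s * f t)
    (hnc : ¬ IsCompact (closure (Set.range f))) :
    (∃ (g : Matrix.SpecialLinearGroup (Fin 2) ℝ) (c : ℝ), c ≠ 0 ∧ c ≠ 1 ∧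
      ∀ t : ℝ, g * f t * g⁻¹ = f (c * t)) ∧
    (∀ (g : Matrix.SpecialLinearGroup (Fin 2) ℝ) (c : ℝ), c ≠ 0 → c ≠ 1 →
      (∀ t : ℝ, g * f t * g⁻¹ = f (c * t)) → g ∉ Set.range f) := by
  classical
  -- basic group facts
  have hf0 : f 0 = 1 := by
    have h := hhom 0 0
    rw [add_zero] at h
    exact (mul_eq_left.1 h.symm)
  -- the coercion to matrices
  set F : ℝ → OPSAux.M2 := fun t => ((f t : OPSAux.M2)) with hFdef
  have hFmul : ∀ s t : ℝ, F (s+t) = F s * F t := by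
    intro s t
    simp only [hFdef, hhom s t, Matrix.SpecialLinearGroup.coe_mul]
  have hF0 : F 0 = 1 := by simp [hFdef, hf0]
  have hFdet : ∀ t, (F t).det = 1 := fun t => (f t).2
  have hFcomm : ∀ s t, F s * F t = F t * F s := by
    intro s t
    rw [← hFmul, ← hFmul, add_comm]
  -- coercion is an embedding
  have hind : Topology.IsInducing (fun g : OPSAux.SL2 => (g : OPSAux.M2)) := ⟨rfl⟩
  have hemb : Topology.IsEmbedding (fun g : OPSAux.SL2 => (g : OPSAux.M2)) :=
    ⟨hind, Subtype.coe_injective⟩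
  have ht2 : T2Space OPSAux.SL2 := hemb.t2Space
  -- a trivial one-parameter group has compact closure of range
  have htriv : (∀ t : ℝ, f t = 1) → False := by
    intro h
    apply hnc
    have hr : Set.range f = {1} := by
      ext g; simp [h, eq_comm]
    rw [hr, closure_singleton]
    exact isCompact_singleton
  -- second part
  have part2 : ∀ (g : Matrix.SpecialLinearGroup (Fin 2) ℝ) (c : ℝ), c ≠ 0 → c ≠ 1 →
      (∀ t : ℝ, g * f t * g⁻¹ = f (c * t)) → g ∉ Set.range f := by
    rintro g c hc0 hc1 hconj ⟨s, hs⟩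
    apply htriv
    intro u
    have hcm : ∀ t, g * f t = f t * g := by
      intro t
      rw [← hs, ← hhom, ← hhom, add_comm]
    have hfix : ∀ t, f (c * t) = f t := by
      intro t
      rw [← hconj t, hcm t, mul_assoc, mul_inv_cancel, mul_one]
    have hcc : c - 1 ≠ 0 := sub_ne_zero.2 hc1
    have key : f u = f (c * (u/(c-1))) * f (-(u/(c-1))) := by
      rw [← hhom]
      congr 1
      field_simp
      ring
    rw [key, hfix, ← hhom]
    simp [hf0]
  refine ⟨?_, part2⟩
  -- trace function
  set T : ℝ → ℝ := fun t => (F t).trace with hTdef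
  have hTcont : Continuous T := by
    have hcoe : Continuous (fun g : OPSAux.SL2 => (g : OPSAux.M2)) := hind.continuous
    have hFc : Continuous F := hcoe.comp hcont
    have : Continuous fun t => (F t) 0 0 + (F t) 1 1 :=
      ((hFc.matrix_elem 0 0).add (hFc.matrix_elem 1 1))
    simpa [hTdef, Matrix.trace_fin_two] using this
  have hT0 : T 0 = 2 := by
    norm_num [hTdef, hF0, Matrix.trace_fin_two, Matrix.one_apply]
  by_cases hyp : ∃ t, (T t)^2 > 4
  · -- hyperbolic case
    obtain ⟨t0, ht0⟩ := hyp
    obtain ⟨a, b, c, d, hA⟩ := OPSAux.exists_entries (F t0)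
    have htau : T t0 = a + d := by simp [hTdef, hA, Matrix.trace_fin_two]
    have hdet1 : a*d - b*c = 1 := by
      have := hFdet t0
      rwa [hA, Matrix.det_fin_two_of] at this
    set τ := T t0 with hτdef
    set δ := Real.sqrt (τ^2 - 4) with hδdef
    have hδpos : 0 < δ := Real.sqrt_pos.2 (by linarith)
    have hδ2 : δ^2 = τ^2 - 4 := Real.sq_sqrt (by linarith)
    set l := (τ+δ)/2 with hldef
    set m := (τ-δ)/2 with hmdef
    have hsum : l + m = τ := by rw [hldef, hmdef]; ring
    have hlm : l * m = 1 := by rw [hldef, hmdef]; linear_combination (-1/4)*hδ2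
    have hne : l ≠ m := by
      intro h
      rw [hldef, hmdef] at h
      linarith
    have htrace : a + d = l + m := by rw [hsum]; linarith [htau]
    have hdet2 : (!![a,b;c,d] : OPSAux.M2).det = l * m := by
      rw [Matrix.det_fin_two_of, hlm]; linarith
    obtain ⟨h1, h2⟩ := OPSAux.ch2 !![a,b;c,d] l m (by simpa using htrace) hdet2
    obtain ⟨u0, u1, hu, hu1, hu2⟩ := OPSAux.eigcol a b c d l m hne htrace h1
    obtain ⟨v0, v1, hv, hv1, hv2⟩ :=
      OPSAux.eigcol a b c d m l hne.symm (by linarith) h2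
    obtain ⟨P, hdetP, hAP⟩ :=
      OPSAux.build_P a b c d l m u0 u1 v0 v1 hne hu hv hu1 hu2 hv1 hv2
    set Q := OPSAux.slinv P with hQdef
    have hPQ : P * Q = 1 := OPSAux.mul_slinv P hdetP
    have hQP : Q * P = 1 := OPSAux.slinv_mul P hdetP
    have hQdet : Q.det = 1 := by
      have := congrArg Matrix.det hQP
      rwa [Matrix.det_mul, hdetP, mul_one, Matrix.det_one] at this
    set X : ℝ → OPSAux.M2 := fun t => Q * F t * P with hXdef
    have hins : ∀ s t : ℝ, X s * X t = X (s+t) := by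
      intro s t
      show (Q * F s * P) * (Q * F t * P) = Q * F (s+t) * P
      rw [hFmul]
      calc (Q * F s * P) * (Q * F t * P)
          = Q * (F s * ((P * Q) * (F t * P))) := by simp only [mul_assoc]
        _ = Q * (F s * F t) * P := by rw [hPQ, one_mul]; simp only [mul_assoc]
    have hX0 : X 0 = 1 := by
      show Q * F 0 * P = 1
      rw [hF0, mul_one, hQP]
    have hXt0 : X t0 = !![l,0;0,m] := by
      show Q * F t0 * P = !![l,0;0,m]
      rw [hA, mul_assoc, hAP, ← mul_assoc, hQP, one_mul]
    have hdiag : ∀ t, X t * !![l,0;0,m] = !![l,0;0,m] * X t := by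
      intro t
      rw [← hXt0, hins, hins, add_comm]
    have hXdet : ∀ t, (X t).det = 1 := by
      intro t
      show (Q * F t * P).det = 1
      rw [Matrix.det_mul, Matrix.det_mul, hQdet, hFdet, hdetP]
      norm_num
    have hXinv : ∀ t : ℝ, X (-t) * X t = 1 := by
      intro t
      have hzero : -t + t = 0 := by ring
      rw [hins, hzero, hX0]
    have key := OPSAux.caseA_core X l m hne hdiag hXdet hXinv
    obtain ⟨g, hg⟩ := OPSAux.conj_pack f P !![0,(1:ℝ);-1,0] Q hdetP
      (by rw [Matrix.det_fin_two_of]; norm_num) hPQ (-1)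
      (by
        intro t
        have h := key t
        rw [show (-1:ℝ)*t = -t by ring]
        exact h)
    exact ⟨g, -1, by norm_num, by norm_num, hg⟩
  · by_cases hell : ∃ t, (T t)^2 < 4
    · -- elliptic case: contradiction with non-compactness
      exfalso
      apply hnc
      obtain ⟨t0, ht0⟩ := hell
      obtain ⟨a, b, c, d, hA⟩ := OPSAux.exists_entries (F t0)
      have htau : T t0 = a + d := by simp [hTdef, hA, Matrix.trace_fin_two]
      have hdet1 : a*d - b*c = 1 := by
        have := hFdet t0
        rwa [hA, Matrix.det_fin_two_of] at this
      have hT2lt : (a+d)^2 < 4 := by rw [← htau]; exact ht0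
      have hb : b ≠ 0 := by
        intro h
        rw [h] at hdet1
        nlinarith [sq_nonneg (a-d)]
      have hb2 : 0 < b^2 := by positivity
      have hdisc : (a-d)^2 + 4*(b*c) < 0 := by nlinarith
      set β := (a-d)/b with hβdef
      set m := -((a-d)^2 + 4*(b*c))/b^2 with hmdef
      have hmpos : 0 < m := by
        rw [hmdef]
        apply div_pos (by linarith) hb2
      have hγ : (β^2+m)/4 = -(c/b) := by
        rw [hβdef, hmdef]
        field_simp
        ring
      set S : Set (ℝ×ℝ) := {p | p.1^2 - β*p.1*p.2 + ((β^2+m)/4)*p.2^2 = 1}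
        with hSdef
      have hScompact : IsCompact S := by
        rw [Metric.isCompact_iff_isClosed_bounded]
        constructor
        · rw [hSdef]
          apply isClosed_eq _ continuous_const
          fun_prop
        · set C := (2*m + 2*β^2)/m + 4/m with hCdef
          have hC1 : 0 < (2*m + 2*β^2)/m := div_pos (by nlinarith [sq_nonneg β]) hmpos
          have hC2 : 0 < 4/m := div_pos (by norm_num) hmpos
          have hCpos : 0 < C := by rw [hCdef]; linarith
          apply Bornology.IsBounded.subset
            (Metric.isBounded_closedBall (x := (0:ℝ×ℝ)) (r := Real.sqrt C))
          intro p hp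
          rw [hSdef, Set.mem_setOf_eq] at hp
          obtain ⟨hy, hx⟩ := OPSAux.ellipse_scalar β m p.1 p.2 hmpos hp
          have hx2 : p.1^2 ≤ C := by
            have h1 : p.1^2 ≤ (2*m+2*β^2)/m := (le_div_iff₀ hmpos).2 hx
            rw [hCdef]; linarith
          have hy2 : p.2^2 ≤ C := by
            have h1 : p.2^2 ≤ 4/m := (le_div_iff₀ hmpos).2 hy
            rw [hCdef]; linarith
          rw [Metric.mem_closedBall, dist_zero_right, Prod.norm_def]
          apply max_le
          · rw [Real.norm_eq_abs, ← Real.sqrt_sq_eq_abs]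
            exact Real.sqrt_le_sqrt hx2
          · rw [Real.norm_eq_abs, ← Real.sqrt_sq_eq_abs]
            exact Real.sqrt_le_sqrt hy2
      set φ : ℝ×ℝ → OPSAux.M2 :=
        fun p => !![p.1, p.2; p.2*c/b, p.1 - p.2*(a-d)/b] with hφdef
      have hφcont : Continuous φ := by
        apply continuous_matrix
        intro i j
        fin_cases i <;> fin_cases j <;> simp [hφdef] <;> fun_prop
      have hKcompact : IsCompact (φ '' S) := hScompact.image hφcont
      set Kset : Set OPSAux.M2 := {M | M.det = 1 ∧ M * F t0 = F t0 * M} with hKsetdef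
      have hKsub : Kset ⊆ φ '' S := by
        rintro M ⟨hMdet, hMcomm⟩
        obtain ⟨x, y, z, w, rfl⟩ := OPSAux.exists_entries M
        rw [hA] at hMcomm
        have e00 : x*a + y*c = a*x + b*z := by
          have := congrFun (congrFun hMcomm 0) 0
          simpa [Matrix.mul_apply, Fin.sum_univ_two] using this
        have e01 : x*b + y*d = a*y + b*w := by
          have := congrFun (congrFun hMcomm 0) 1
          simpa [Matrix.mul_apply, Fin.sum_univ_two] using this
        rw [Matrix.det_fin_two_of] at hMdet
        have hz : z = y*c/b := by field_simp; linarith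
        have hw : w = x - y*(a-d)/b := by field_simp; linarith
        rw [hz, hw] at hMdet
        refine ⟨(x,y), ?_, ?_⟩
        · rw [hSdef, Set.mem_setOf_eq]
          show x^2 - β*x*y + ((β^2+m)/4)*y^2 = 1
          rw [hγ, hβdef]
          field_simp at hMdet ⊢
          linear_combination hMdet
        · show φ (x,y) = !![x,y;z,w]
          rw [hφdef, hz, hw]
      have hKclosed : IsClosed Kset := by
        rw [hKsetdef]
        exact (isClosed_eq (Continuous.matrix_det continuous_id) continuous_const).inter
          (isClosed_eq (Continuous.matrix_mul continuous_id continuous_const)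
            (Continuous.matrix_mul continuous_const continuous_id))
      have hKcpt : IsCompact Kset :=
        IsCompact.of_isClosed_subset hKcompact hKclosed hKsub
      set Cset : Set OPSAux.SL2 :=
        (fun g : OPSAux.SL2 => (g : OPSAux.M2)) ⁻¹' Kset with hCsetdef
      have hCclosed : IsClosed Cset := hKclosed.preimage hind.continuous
      have himg : (fun g : OPSAux.SL2 => (g : OPSAux.M2)) '' Cset = Kset := by
        ext M
        constructor
        · rintro ⟨g, hg, rfl⟩
          exact hg
        · intro hM
          exact ⟨⟨M, hM.1⟩, hM, rfl⟩
      have hCcpt : IsCompact Cset := hind.isCompact_iff.2 (by rw [himg]; exact hKcpt)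
      have hrange : Set.range f ⊆ Cset := by
        rintro - ⟨t, rfl⟩
        refine ⟨(f t).2, ?_⟩
        show F t * F t0 = F t0 * F t
        exact hFcomm t t0
      exact hCcpt.of_isClosed_subset isClosed_closure
        (closure_minimal hrange hCclosed)

    · -- parabolic case
      push_neg at hyp hell
      have hT4 : ∀ t, (T t)^2 = 4 := fun t => le_antisymm (hyp t) (hell t)
      have hT2 : ∀ t, T t = 2 := by
        intro t
        by_contra hne2
        have hm2 : T t = -2 := by
          have h4 := hT4 t
          rcases mul_eq_zero.1 (show (T t - 2)*(T t + 2) = 0 by nlinarith) with h|h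
          · exact absurd (by linarith) hne2
          · linarith
        obtain ⟨s, -, hs⟩ := intermediate_value_uIcc
          (hTcont.continuousOn (s := Set.uIcc 0 t))
          (show (0:ℝ) ∈ Set.uIcc (T 0) (T t) by
            rw [hT0, hm2, Set.mem_uIcc]; norm_num)
        have h4 := hT4 s
        rw [hs] at h4
        norm_num at h4
      have hex : ∃ t0, f t0 ≠ 1 := by
        by_contra h
        push_neg at h
        exact htriv h
      obtain ⟨t0, ht0⟩ := hex
      have htr0 : (F t0) 0 0 + (F t0) 1 1 = 1 + 1 := by
        have := hT2 t0
        simp [hTdef, Matrix.trace_fin_two] at this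
        linarith
      obtain ⟨h1, -⟩ := OPSAux.ch2 (F t0) 1 1 htr0 (by rw [hFdet]; norm_num)
      set N := F t0 - (1 : OPSAux.M2) with hNdef
      have hsq : N * N = 0 := by
        have : ((1:ℝ) • (1 : OPSAux.M2)) = 1 := one_smul _ _
        rw [hNdef, ← this]
        exact h1
      have hNne : N ≠ 0 := by
        intro h0
        apply ht0
        apply Subtype.coe_injective
        have hF1 : F t0 = 1 := by
          have := sub_eq_zero.1 (show F t0 - 1 = 0 from h0)
          exact this
        simpa using hF1
      obtain ⟨P, bb, hbb, hdetP, hNP⟩ := OPSAux.build_P_nilp N hNne hsq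
      set Q := OPSAux.slinv P with hQdef
      have hPQ : P * Q = 1 := OPSAux.mul_slinv P hdetP
      have hQP : Q * P = 1 := OPSAux.slinv_mul P hdetP
      set X : ℝ → OPSAux.M2 := fun t => Q * F t * P with hXdef
      have hins : ∀ s t : ℝ, X s * X t = X (s+t) := by
        intro s t
        show (Q * F s * P) * (Q * F t * P) = Q * F (s+t) * P
        rw [hFmul]
        calc (Q * F s * P) * (Q * F t * P)
            = Q * (F s * ((P * Q) * (F t * P))) := by simp only [mul_assoc]
          _ = Q * (F s * F t) * P := by rw [hPQ, one_mul]; simp only [mul_assoc]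
      have hQNP : Q * N * P = !![0,bb;0,0] := by
        rw [mul_assoc, hNP, ← mul_assoc, hQP, one_mul]
      have hFN : ∀ t, F t * N = N * F t := by
        intro t
        rw [hNdef, mul_sub, sub_mul, mul_one, one_mul, hFcomm]
      have hXE : ∀ t, X t * !![0,bb;0,0] = !![0,bb;0,0] * X t := by
        intro t
        rw [← hQNP]
        show (Q * F t * P) * (Q * N * P) = (Q * N * P) * (Q * F t * P)
        calc (Q * F t * P) * (Q * N * P)
            = Q * (F t * ((P * Q) * (N * P))) := by simp only [mul_assoc]
          _ = Q * ((F t * N) * P) := by rw [hPQ, one_mul]; simp only [mul_assoc]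
          _ = Q * ((N * F t) * P) := by rw [hFN]
          _ = Q * (N * ((P * Q) * (F t * P))) := by rw [hPQ, one_mul]; simp only [mul_assoc]
          _ = (Q * N * P) * (Q * F t * P) := by simp only [mul_assoc]
      have hform : ∀ t, X t = !![1, X t 0 1; 0, 1] := by
        intro t
        have hh := OPSAux.comm_nilp (X t) bb hbb (hXE t)
        have htrX : X t 0 0 + X t 1 1 = 2 := by
          have htreq : (X t).trace = (F t).trace := by
            show ((Q * F t) * P).trace = _
            rw [Matrix.trace_mul_comm (Q * F t) P, ← mul_assoc, hPQ, one_mul]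
          have h2 := hT2 t
          simp [hTdef, Matrix.trace_fin_two] at h2 htreq
          linarith
        have h11 : X t 1 1 = X t 0 0 := by
          have := congrFun (congrFun hh 1) 1
          simpa using this
        have h00 : X t 0 0 = 1 := by linarith
        conv_lhs => rw [hh]
        rw [h00]
      have key := OPSAux.caseC_core X hform hins
      obtain ⟨g, hg⟩ := OPSAux.conj_pack f P !![(2:ℝ),0;0,1/2] Q hdetP
        (by rw [Matrix.det_fin_two_of]; norm_num) hPQ 4 (fun t => key t)
      exact ⟨g, 4, by norm_num, by norm_num, hg⟩
end

section
/- Let X be a topological space, ρ : SL(2,ℝ) → Homeo(X) a group homomorphism into the group of self-homeomorphisms of X, and f : ℝ → SL(2,ℝ) a one-parameter subgroup whose range has non-compact closure. Define the flow E_t := ρ(f(t)), and assume E_{t₁} ≠ id for some t₁ ∈ ℝ. Then E is not strongly asymmetric: there exist a homeomorphism F of X and a real number c ≠ 0 such that E_t ∘ F = F ∘ E_{c t} for all t ∈ ℝ, and F ≠ E_{t₀} for every t₀ ∈ ℝ. In particular, a strongly asymmetric nontrivial flow is not the restriction of any SL(2,ℝ)-action by homeomorphisms to a non-compact one-parameter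 subgroup. -/
/-- The group of self-homeomorphisms of a topological space, with `(F * G) x = F (G x)`. -/
instance {X : Type*} [TopologicalSpace X] : Group (X ≃ₜ X) where
  mul F G := G.trans F
  one := Homeomorph.refl X
  inv := Homeomorph.symm
  mul_assoc F G H := rfl
  one_mul F := Homeomorph.ext fun x => rfl
  mul_one F := Homeomorph.ext fun x => rfl
  inv_mul_cancel F := Homeomorph.ext fun x => F.symm_apply_apply x

open Matrix in
private lemma comm2 {h m : Matrix (Fin 2) (Fin 2) ℝ}
    (hns : ¬ (h 0 1 = 0 ∧ h 1 0 = 0 ∧ h 0 0 = h 1 1))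
    (hc : m * h = h * m) :
    ∃ α β : ℝ, m = α • (1 : Matrix (Fin 2) (Fin 2) ℝ) + β • h := by
  have e : ∀ i j, (m * h) i j = (h * m) i j := fun i j => by rw [hc]
  have e00 := e 0 0; have e01 := e 0 1; have e10 := e 1 0
  simp only [Matrix.mul_apply, Fin.sum_univ_two] at e00 e01 e10
  by_cases hq : h 0 1 ≠ 0
  · refine ⟨m 0 0 - (m 0 1 / h 0 1) * h 0 0, m 0 1 / h 0 1, ?_⟩
    ext i j
    fin_cases i <;> fin_cases j <;>
      simp only [Matrix.add_apply, Matrix.smul_apply, Matrix.one_apply, smul_eq_mul] <;>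
      norm_num <;> field_simp
    · linear_combination -e00
    · linear_combination -e01
  · push_neg at hq
    by_cases hr : h 1 0 ≠ 0
    · refine ⟨m 0 0 - (m 1 0 / h 1 0) * h 0 0, m 1 0 / h 1 0, ?_⟩
      ext i j
      fin_cases i <;> fin_cases j <;>
        simp only [Matrix.add_apply, Matrix.smul_apply, Matrix.one_apply, smul_eq_mul] <;>
        norm_num <;> field_simp
      · linear_combination e00
      · linear_combination e10
    · push_neg at hr
      have hps : h 0 0 ≠ h 1 1 := fun hh => hns ⟨hq, hr, hh⟩
      have hy : m 0 1 = 0 := by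
        rw [hq] at e01
        have h2 : m 0 1 * (h 1 1 - h 0 0) = 0 := by linear_combination e01
        rcases mul_eq_zero.mp h2 with h' | h'
        · exact h'
        · exact absurd (by linarith [sub_eq_zero.mp h']) hps
      have hz : m 1 0 = 0 := by
        rw [hr] at e10
        have h2 : m 1 0 * (h 0 0 - h 1 1) = 0 := by linear_combination e10
        rcases mul_eq_zero.mp h2 with h' | h'
        · exact h'
        · exact absurd (sub_eq_zero.mp h') hps
      have hd : h 0 0 - h 1 1 ≠ 0 := sub_ne_zero.mpr hps
      refine ⟨m 0 0 - ((m 0 0 - m 1 1)/(h 0 0 - h 1 1)) * h 0 0,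
             (m 0 0 - m 1 1)/(h 0 0 - h 1 1), ?_⟩
      ext i j
      fin_cases i <;> fin_cases j <;>
        simp only [Matrix.add_apply, Matrix.smul_apply, Matrix.one_apply, smul_eq_mul] <;>
        norm_num [hy, hz, hq, hr] <;> field_simp <;> ring

open Matrix in
private lemma adj2 (m : Matrix (Fin 2) (Fin 2) ℝ) :
    m.adjugate = m.trace • (1 : Matrix (Fin 2) (Fin 2) ℝ) - m := by
  rw [Matrix.adjugate_fin_two]
  ext i j
  fin_cases i <;> fin_cases j <;>
    simp [Matrix.trace_fin_two, Matrix.one_apply] <;> ring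

open Matrix in
private lemma conj_hyperbolic (h : Matrix (Fin 2) (Fin 2) ℝ) (hdet : h.det = 1)
    (hτ : 4 < h.trace ^ 2) :
    ∃ g : Matrix (Fin 2) (Fin 2) ℝ, g.det = 1 ∧
      g * h = (h.trace • (1 : Matrix (Fin 2) (Fin 2) ℝ) - h) * g := by
  obtain ⟨p, q, r, s, rfl⟩ : ∃ p q r s, h = !![p,q;r,s] := ⟨_,_,_,_, eta_fin_two h⟩
  rw [Matrix.det_fin_two_of] at hdet
  have htr : Matrix.trace !![p,q;r,s] = p + s := by rw [Matrix.trace_fin_two]; simp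
  rw [htr] at hτ ⊢
  have hd2 : (0:ℝ) < (p + s)^2 - 4 := by linarith
  set d := Real.sqrt ((p + s)^2 - 4) with hdd
  have hdsq : d ^ 2 = (p + s)^2 - 4 := Real.sq_sqrt (le_of_lt hd2)
  have hd0 : d ≠ 0 := by positivity
  have hkey : (p - s)^2 + 4*(q*r) = d^2 := by rw [hdsq]; linear_combination -4 * hdet
  by_cases hq : q ≠ 0
  · refine ⟨!![(p-s)/d, 2*q/d; -((p-s)^2 + 2*(q*r))/(q*d), -((p-s)/d)], ?_, ?_⟩
    · rw [Matrix.det_fin_two_of]; field_simp; linear_combination hkey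
    · ext i j
      fin_cases i <;> fin_cases j <;>
        simp only [Matrix.mul_apply, Fin.sum_univ_two, Matrix.sub_apply, Matrix.smul_apply,
          Matrix.one_apply, Matrix.cons_val', Matrix.cons_val_zero, Matrix.cons_val_one,
          Matrix.head_cons, Matrix.empty_val', Matrix.cons_val_fin_one, Matrix.head_fin_const,
          smul_eq_mul] <;> norm_num <;> field_simp <;> try ring
  · push_neg at hq
    subst hq
    by_cases hr : r ≠ 0
    · have h2 : (p - s)^2 = d^2 := by rw [hdsq]; linear_combination -4*hdet
      refine ⟨!![(p-s)/d, -d/r; 2*r/d, -((p-s)/d)], ?_, ?_⟩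
      · rw [Matrix.det_fin_two_of]; field_simp; linear_combination -h2
      · ext i j
        fin_cases i <;> fin_cases j <;>
          simp only [Matrix.mul_apply, Fin.sum_univ_two, Matrix.sub_apply, Matrix.smul_apply,
            Matrix.one_apply, Matrix.cons_val', Matrix.cons_val_zero, Matrix.cons_val_one,
            Matrix.head_cons, Matrix.empty_val', Matrix.cons_val_fin_one, Matrix.head_fin_const,
            smul_eq_mul] <;> norm_num
        · field_simp
          linear_combination h2
        · ring
        · ring
        · field_simp
          linear_combination h2
    · push_neg at hr
      subst hr
      refine ⟨!![0, 1; -1, 0], by rw [Matrix.det_fin_two_of]; norm_num, ?_⟩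
      ext i j
      fin_cases i <;> fin_cases j <;>
        simp only [Matrix.mul_apply, Fin.sum_univ_two, Matrix.sub_apply, Matrix.smul_apply,
          Matrix.one_apply, Matrix.cons_val', Matrix.cons_val_zero, Matrix.cons_val_one,
          Matrix.head_cons, Matrix.empty_val', Matrix.cons_val_fin_one, Matrix.head_fin_const,
          smul_eq_mul] <;> norm_num <;> ring

open Matrix in
private lemma conj_nilpotent (N : Matrix (Fin 2) (Fin 2) ℝ) (htr : N.trace = 0)
    (hdet : N.det = 0) :
    ∃ g : Matrix (Fin 2) (Fin 2) ℝ, g.det = 1 ∧ g * N = (4:ℝ) • (N * g) := by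
  obtain ⟨n, q, r, m, rfl⟩ : ∃ n q r m, N = !![n,q;r,m] := ⟨_,_,_,_, eta_fin_two N⟩
  rw [Matrix.trace_fin_two] at htr
  simp only [Fin.isValue, Matrix.of_apply, Matrix.cons_val', Matrix.cons_val_zero,
    Matrix.empty_val', Matrix.cons_val_fin_one, Matrix.cons_val_one, Matrix.head_cons,
    Matrix.head_fin_const] at htr
  rw [Matrix.det_fin_two_of] at hdet
  have hm : m = -n := by linarith
  subst hm
  have hqr : q * r = -(n^2) := by linear_combination -hdet
  by_cases hq : q ≠ 0
  · refine ⟨!![2, 0; -3*n/(2*q), 1/2], ?_, ?_⟩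
    · rw [Matrix.det_fin_two_of]; norm_num
    · ext i j
      fin_cases i <;> fin_cases j <;>
        simp only [Matrix.mul_apply, Fin.sum_univ_two, Matrix.smul_apply, Fin.isValue,
          Matrix.of_apply, Matrix.cons_val', Matrix.cons_val_zero, Matrix.cons_val_one,
          Matrix.head_cons, Matrix.empty_val', Matrix.cons_val_fin_one, Matrix.head_fin_const,
          smul_eq_mul] <;> norm_num <;> try field_simp
      all_goals first | ring1 | linear_combination (-60*q)*hqr | linear_combination (-15)*hqr
  · push_neg at hq
    subst hq
    have hn : n = 0 := by nlinarith [hqr]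
    subst hn
    refine ⟨!![1/2, 0; 0, 2], ?_, ?_⟩
    · rw [Matrix.det_fin_two_of]; norm_num
    · ext i j
      fin_cases i <;> fin_cases j <;>
        simp only [Matrix.mul_apply, Fin.sum_univ_two, Matrix.smul_apply, Fin.isValue,
          Matrix.of_apply, Matrix.cons_val', Matrix.cons_val_zero, Matrix.cons_val_one,
          Matrix.head_cons, Matrix.empty_val', Matrix.cons_val_fin_one, Matrix.head_fin_const,
          smul_eq_mul] <;> norm_num
      all_goals ring

open Matrix in
private lemma SL2aux_range_coe :
    Set.range (fun g : Matrix.SpecialLinearGroup (Fin 2) ℝ => (g : Matrix (Fin 2) (Fin 2) ℝ))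
      = {m : Matrix (Fin 2) (Fin 2) ℝ | m.det = 1} := by
  ext m
  constructor
  · rintro ⟨g, rfl⟩; exact g.prop
  · intro hm; exact ⟨⟨m, hm⟩, rfl⟩

open Matrix in
private lemma SL2aux_compact_closure {S : Set (Matrix.SpecialLinearGroup (Fin 2) ℝ)}
    {C : Set (Matrix (Fin 2) (Fin 2) ℝ)} (hC : IsCompact C) (hCc : IsClosed C)
    (hsub : (fun g : Matrix.SpecialLinearGroup (Fin 2) ℝ =>
        (g : Matrix (Fin 2) (Fin 2) ℝ)) '' S ⊆ C) :
    IsCompact (closure S) := by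
  have hind : Topology.IsInducing
      (fun g : Matrix.SpecialLinearGroup (Fin 2) ℝ => (g : Matrix (Fin 2) (Fin 2) ℝ)) := ⟨rfl⟩
  rw [hind.isCompact_iff]
  have hdetc : Continuous fun m : Matrix (Fin 2) (Fin 2) ℝ => m.det := by
    simp_rw [Matrix.det_fin_two]; fun_prop
  have hrc : IsClosed (Set.range
      (fun g : Matrix.SpecialLinearGroup (Fin 2) ℝ => (g : Matrix (Fin 2) (Fin 2) ℝ))) := by
    rw [SL2aux_range_coe]; exact isClosed_eq hdetc continuous_const
  have himg : (fun g : Matrix.SpecialLinearGroup (Fin 2) ℝ => (g : Matrix (Fin 2) (Fin 2) ℝ))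
      '' closure S = closure ((fun g : Matrix.SpecialLinearGroup (Fin 2) ℝ =>
        (g : Matrix (Fin 2) (Fin 2) ℝ)) '' S) ∩ Set.range
        (fun g : Matrix.SpecialLinearGroup (Fin 2) ℝ => (g : Matrix (Fin 2) (Fin 2) ℝ)) := by
    rw [hind.closure_eq_preimage_closure_image, Set.image_preimage_eq_inter_range]
  rw [himg]
  exact hC.of_isClosed_subset (isClosed_closure.inter hrc)
    fun x hx => closure_minimal hsub hCc hx.1

private lemma final_step {X : Type*} [TopologicalSpace X]
    (ρ : Matrix.SpecialLinearGroup (Fin 2) ℝ →* (X ≃ₜ X))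
    (f : ℝ → Matrix.SpecialLinearGroup (Fin 2) ℝ)
    (hhom : ∀ s t : ℝ, f (s + t) = f s * f t)
    (t₁ : ℝ) (ht₁ : ρ (f t₁) ≠ Homeomorph.refl X)
    (G : Matrix.SpecialLinearGroup (Fin 2) ℝ) (c : ℝ) (hc0 : c ≠ 0) (hc1 : c ≠ 1)
    (key : ∀ t : ℝ, f t * G = G * f (c * t)) :
    ∃ (F : X ≃ₜ X) (c : ℝ), c ≠ 0 ∧
      (∀ t : ℝ, ⇑(ρ (f t)) ∘ ⇑F = ⇑F ∘ ⇑(ρ (f (c * t)))) ∧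
      ∀ t₀ : ℝ, F ≠ ρ (f t₀) := by
  have keyρ : ∀ t, ρ (f t) * ρ G = ρ G * ρ (f (c*t)) := fun t => by
    rw [← map_mul, ← map_mul, key t]
  refine ⟨ρ G, c, hc0, ?_, ?_⟩
  · intro t
    funext x
    exact congrArg (fun H : X ≃ₜ X => H x) (keyρ t)
  · intro t₀ hF
    have hc1' : c - 1 ≠ 0 := sub_ne_zero.mpr hc1
    have hcomm : ρ (f t₀) * ρ (f (t₁/(c-1))) = ρ (f (t₁/(c-1))) * ρ (f t₀) := by
      rw [← map_mul, ← map_mul, ← hhom, ← hhom, add_comm]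
    have hk := keyρ (t₁/(c-1))
    rw [hF, ← hcomm] at hk
    have h2 : ρ (f (t₁/(c-1))) = ρ (f (c * (t₁/(c-1)))) := mul_left_cancel hk
    have hsplit : f (c * (t₁/(c-1))) = f t₁ * f (t₁/(c-1)) := by
      rw [← hhom]; congr 1; field_simp; ring
    rw [hsplit, map_mul] at h2
    have h3 : ρ (f t₁) = 1 := right_eq_mul.mp h2
    exact ht₁ (by rw [h3]; rfl)

/-- If a flow `E_t = ρ(f(t))` arises from an `SL(2, ℝ)`-action `ρ` by
homeomorphisms restricted to a non-compact one-parameter subgroup `f`, and `E` is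
nontrivial, then `E` is not strongly asymmetric: it has a `c`-normalizer that is not an
element of the flow. -/
theorem flow_from_SL2_action_not_strongly_asymmetric {X : Type*} [TopologicalSpace X]
    (ρ : Matrix.SpecialLinearGroup (Fin 2) ℝ →* (X ≃ₜ X))
    (f : ℝ → Matrix.SpecialLinearGroup (Fin 2) ℝ)
    (hcont : Continuous f) (hhom : ∀ s t : ℝ, f (s + t) = f s * f t)
    (hnc : ¬ IsCompact (closure (Set.range f)))
    (t₁ : ℝ) (ht₁ : ρ (f t₁) ≠ Homeomorph.refl X) :
    ∃ (F : X ≃ₜ X) (c : ℝ), c ≠ 0 ∧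
      (∀ t : ℝ, ⇑(ρ (f t)) ∘ ⇑F = ⇑F ∘ ⇑(ρ (f (c * t)))) ∧
      ∀ t₀ : ℝ, F ≠ ρ (f t₀) := by
  classical
  have hcoe : ∀ (A B : Matrix.SpecialLinearGroup (Fin 2) ℝ),
      (A : Matrix (Fin 2) (Fin 2) ℝ) = (B : Matrix (Fin 2) (Fin 2) ℝ) → A = B :=
    fun A B hAB => Subtype.ext hAB
  have f0 : f 0 = 1 := by
    have h0 := hhom 0 0
    rw [add_zero] at h0
    exact left_eq_mul.mp h0
  have fcomm : ∀ a b : ℝ, f a * f b = f b * f a := fun a b => by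
    rw [← hhom, ← hhom, add_comm]
  have finv : ∀ t, f (-t) = (f t)⁻¹ := fun t =>
    eq_inv_of_mul_eq_one_left (by rw [← hhom, neg_add_cancel, f0])
  -- find a nontrivial element of the one-parameter subgroup
  have hne : ∃ u : ℝ, (f u : Matrix (Fin 2) (Fin 2) ℝ) ≠ 1 ∧
      (f u : Matrix (Fin 2) (Fin 2) ℝ) ≠ -1 := by
    by_contra hcon
    push_neg at hcon
    refine hnc (SL2aux_compact_closure (C := {1, -1}) (Set.toFinite _).isCompact
      ((Set.toFinite _).isClosed) ?_)
    rintro x ⟨g, ⟨u, rfl⟩, rfl⟩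
    simp only [Set.mem_insert_iff, Set.mem_singleton_iff]
    rcases eq_or_ne ((f u : Matrix (Fin 2) (Fin 2) ℝ)) 1 with h1 | h1
    · exact Or.inl h1
    · exact Or.inr (hcon u h1)
  obtain ⟨u, hu1, hu2⟩ := hne
  set hM : Matrix (Fin 2) (Fin 2) ℝ := (f u : Matrix (Fin 2) (Fin 2) ℝ) with hMdef
  have hdetH : hM.det = 1 := (f u).prop
  have hdH : hM 0 0 * hM 1 1 - hM 0 1 * hM 1 0 = 1 := by
    rw [← Matrix.det_fin_two]; exact hdetH
  have hns : ¬ (hM 0 1 = 0 ∧ hM 1 0 = 0 ∧ hM 0 0 = hM 1 1) := by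
    rintro ⟨hq, hr, hps⟩
    have hsq : hM 0 0 * hM 0 0 = 1 := by
      rw [← hps, hq, hr] at hdH
      linear_combination hdH
    rcases mul_self_eq_one_iff.mp hsq with h1 | h1
    · apply hu1
      ext i j
      fin_cases i <;> fin_cases j <;>
        simp only [Matrix.one_apply] <;>
        norm_num [hq, hr, h1, hps.symm.trans h1]
    · apply hu2
      ext i j
      fin_cases i <;> fin_cases j <;>
        simp only [Matrix.one_apply, Matrix.neg_apply] <;>
        norm_num [hq, hr, h1, hps.symm.trans h1]
  have hcommH : ∀ t, (f t : Matrix (Fin 2) (Fin 2) ℝ) * hM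
      = hM * (f t : Matrix (Fin 2) (Fin 2) ℝ) := by
    intro t
    have h2 := congrArg (fun A : Matrix.SpecialLinearGroup (Fin 2) ℝ =>
      (A : Matrix (Fin 2) (Fin 2) ℝ)) (fcomm t u)
    simpa using h2
  set τ : ℝ := hM.trace with hτdef
  have hτtr : τ = hM 0 0 + hM 1 1 := Matrix.trace_fin_two hM
  rcases lt_trichotomy (τ^2) 4 with hell | hpar | hhyp
  · -- elliptic: the closure of the range would be compact, contradiction
    exfalso
    apply hnc
    have h4pos : (0:ℝ) < 4 - τ^2 := by linarith
    set B : ℝ := Real.sqrt (4 / (4 - τ^2)) with hBdef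
    have hB2 : B^2 = 4/(4 - τ^2) := Real.sq_sqrt (by positivity)
    have hBnn : 0 ≤ B := Real.sqrt_nonneg _
    set φ : ℝ × ℝ → Matrix (Fin 2) (Fin 2) ℝ := fun ab => ab.1 • 1 + ab.2 • hM with hφdef
    have hφc : Continuous φ := by
      apply Continuous.add
      · exact (continuous_fst).smul continuous_const
      · exact (continuous_snd).smul continuous_const
    have hK : IsCompact ((Set.Icc (-B) B ×ˢ Set.Icc (-B) B) : Set (ℝ × ℝ)) :=
      isCompact_Icc.prod isCompact_Icc
    have hC : IsCompact (φ '' (Set.Icc (-B) B ×ˢ Set.Icc (-B) B)) := hK.image hφc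
    refine SL2aux_compact_closure hC hC.isClosed ?_
    rintro x ⟨g, ⟨t, rfl⟩, rfl⟩
    obtain ⟨α, β, hαβ⟩ := comm2 hns (hcommH t)
    have hdet1 : α^2 + α*β*τ + β^2 = 1 := by
      have hd := (f t).prop
      rw [show ((f t : Matrix.SpecialLinearGroup (Fin 2) ℝ) : Matrix (Fin 2) (Fin 2) ℝ).det
        = ((f t : Matrix.SpecialLinearGroup (Fin 2) ℝ) : Matrix (Fin 2) (Fin 2) ℝ).det from rfl,
        hαβ, Matrix.det_fin_two] at hd
      simp only [Matrix.add_apply, Matrix.smul_apply, Matrix.one_apply, smul_eq_mul] at hd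
      norm_num at hd
      rw [hτtr]
      linear_combination hd - (β^2) * hdH
    have habs : ∀ x y : ℝ, x^2 + x*y*τ + y^2 = 1 → |x| ≤ B := by
      intro x y hxy
      have hx2 : x^2 ≤ B^2 := by
        rw [hB2, le_div_iff₀ h4pos]
        nlinarith [sq_nonneg (2*y + x*τ)]
      have hh := Real.sqrt_le_sqrt hx2
      rwa [Real.sqrt_sq_eq_abs, Real.sqrt_sq hBnn] at hh
    have hain : α ∈ Set.Icc (-B) B := by
      have := habs α β hdet1
      exact abs_le.mp this
    have hbin : β ∈ Set.Icc (-B) B := by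
      have := habs β α (by linarith [hdet1] ; )
      exact abs_le.mp this
    exact ⟨(α, β), Set.mk_mem_prod hain hbin, hαβ.symm⟩
  · -- parabolic
    set σ : ℝ := τ/2 with hσdef
    have h2σ : 2*σ = τ := by rw [hσdef]; ring
    have hσ2 : σ^2 = 1 := by rw [hσdef, div_pow, hpar]; norm_num
    set N : Matrix (Fin 2) (Fin 2) ℝ := hM - σ • 1 with hNdef
    have hNe : ∀ i j, N i j = hM i j - σ * (1 : Matrix (Fin 2) (Fin 2) ℝ) i j := by
      intro i j
      simp [hNdef, Matrix.sub_apply, Matrix.smul_apply, smul_eq_mul]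
    have htrN : N.trace = 0 := by
      rw [Matrix.trace_fin_two, hNe 0 0, hNe 1 1]
      simp [Matrix.one_apply]
      linarith [hτtr, h2σ]
    have htN : N 0 0 + N 1 1 = 0 := by rw [← Matrix.trace_fin_two]; exact htrN
    have hdetN : N.det = 0 := by
      rw [Matrix.det_fin_two, hNe 0 0, hNe 0 1, hNe 1 0, hNe 1 1]
      simp only [Matrix.one_apply]
      norm_num
      linear_combination hdH + hσ2 - σ * h2σ + (τ/2) * hτtr - (1/2) * hpar
    have hdN : N 0 0 * N 1 1 - N 0 1 * N 1 0 = 0 := by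
      rw [← Matrix.det_fin_two]; exact hdetN
    have hN0 : N ≠ 0 := by
      intro h0
      apply hns
      have hent : ∀ i j, hM i j = σ * (1 : Matrix (Fin 2) (Fin 2) ℝ) i j := by
        intro i j
        have hz : N i j = 0 := by rw [h0]; simp
        rw [hNe i j] at hz
        linarith
      refine ⟨?_, ?_, ?_⟩
      · simpa [Matrix.one_apply] using hent 0 1
      · simpa [Matrix.one_apply] using hent 1 0
      · rw [hent 0 0, hent 1 1]
        simp [Matrix.one_apply]
    have hNN : N * N = 0 := by
      have h1 := Matrix.mul_adjugate N
      rw [adj2, htrN, zero_smul, zero_sub, mul_neg, hdetN, zero_smul, neg_eq_zero] at h1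
      exact h1
    have hrep : ∀ t, ∃ a b : ℝ,
        (f t : Matrix (Fin 2) (Fin 2) ℝ) = a • 1 + b • N := by
      intro t
      obtain ⟨α, β, hab⟩ := comm2 hns (hcommH t)
      refine ⟨α + β*σ, β, ?_⟩
      rw [hab, hNdef]
      module
    choose a b hab using hrep
    have huniq : ∀ (x y x' y' : ℝ),
        x • (1 : Matrix (Fin 2) (Fin 2) ℝ) + y • N = x' • 1 + y' • N → x = x' ∧ y = y' := by
      intro x y x' y' hxy
      have htr2 := congrArg Matrix.trace hxy
      simp only [Matrix.trace_add, Matrix.trace_smul, htrN, Matrix.trace_one, smul_eq_mul,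
        smul_zero, add_zero] at htr2
      have hx : x = x' := by
        norm_num at htr2
        exact htr2
      subst hx
      refine ⟨rfl, ?_⟩
      have hyy : (y - y') • N = 0 := by
        rw [sub_smul, sub_eq_zero]
        exact add_left_cancel hxy
      rcases smul_eq_zero.mp hyy with h' | h'
      · linarith [sub_eq_zero.mp h']
      · exact absurd h' hN0
    have hmul : ∀ s t : ℝ, a (s+t) = a s * a t ∧ b (s+t) = a s * b t + b s * a t := by
      intro s t
      have hm : (f (s+t) : Matrix (Fin 2) (Fin 2) ℝ)
          = (f s : Matrix (Fin 2) (Fin 2) ℝ) * (f t : Matrix (Fin 2) (Fin 2) ℝ) := by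
        rw [hhom]
        simp
      rw [hab, hab, hab] at hm
      have hexp : (a s • (1 : Matrix (Fin 2) (Fin 2) ℝ) + b s • N) * (a t • 1 + b t • N)
          = (a s * a t) • 1 + (a s * b t + b s * a t) • N := by
        simp only [add_mul, mul_add, smul_mul_smul_comm, one_mul, mul_one, hNN,
          smul_zero, add_zero]
        module
      exact huniq _ _ _ _ (hm.trans hexp)
    have hadet : ∀ t, a t ^ 2 = 1 := by
      intro t
      have hd := (f t).prop
      rw [show ((f t : Matrix.SpecialLinearGroup (Fin 2) ℝ) : Matrix (Fin 2) (Fin 2) ℝ).det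
        = ((f t : Matrix.SpecialLinearGroup (Fin 2) ℝ) : Matrix (Fin 2) (Fin 2) ℝ).det from rfl,
        hab, Matrix.det_fin_two] at hd
      simp only [Matrix.add_apply, Matrix.smul_apply, Matrix.one_apply, smul_eq_mul] at hd
      norm_num at hd
      linear_combination hd - (a t * b t) * htN - (b t^2) * hdN
    have ha1 : ∀ t, a t = 1 := by
      intro t
      have h2 := (hmul (t/2) (t/2)).1
      rw [add_halves] at h2
      have h4 : (a t - 1) * (a t + 1) = 0 := by linear_combination hadet t
      rcases mul_eq_zero.mp h4 with h' | h'
      · linarith [sub_eq_zero.mp h']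
      · exfalso
        nlinarith [sq_nonneg (a (t/2))]
    have hbadd : ∀ s t : ℝ, b (s+t) = b s + b t := by
      intro s t
      have := (hmul s t).2
      rw [ha1 s, ha1 t, one_mul, mul_one] at this
      linarith [this]
    have hb4 : ∀ t, b (4*t) = 4 * b t := by
      intro t
      have h1 := hbadd t t
      have h2 := hbadd (t+t) (t+t)
      rw [show (4:ℝ)*t = (t+t)+(t+t) by ring, h2, h1]
      ring
    obtain ⟨g, hgdet, hgN⟩ := conj_nilpotent N htrN hdetN
    set G : Matrix.SpecialLinearGroup (Fin 2) ℝ := ⟨g, hgdet⟩ with hGdef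
    have key : ∀ t : ℝ, f t * G = G * f ((1/4) * t) := by
      intro t
      apply hcoe
      rw [Matrix.SpecialLinearGroup.coe_mul, Matrix.SpecialLinearGroup.coe_mul]
      have hGg : (G : Matrix (Fin 2) (Fin 2) ℝ) = g := rfl
      rw [hGg, hab t, hab ((1/4)*t), ha1 t, ha1 ((1/4)*t), one_smul]
      have hbt : b t = 4 * b ((1/4)*t) := by
        have := hb4 ((1/4)*t)
        rw [show (4:ℝ)*((1/4)*t) = t by ring] at this
        linarith
      rw [hbt]
      rw [add_mul]
      rw [one_mul]
      rw [smul_mul_assoc]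
      rw [mul_add]
      rw [mul_one]
      rw [mul_smul_comm]
      rw [hgN]
      rw [smul_smul]
      rw [mul_comm (4:ℝ) (b ((1/4)*t))]
    exact final_step ρ f hhom t₁ ht₁ G (1/4) (by norm_num) (by norm_num) key
  · -- hyperbolic
    obtain ⟨g, hgdet, hgh⟩ := conj_hyperbolic hM hdetH (by rw [← hτdef]; exact hhyp)
    set G : Matrix.SpecialLinearGroup (Fin 2) ℝ := ⟨g, hgdet⟩ with hGdef
    have hkeyM : ∀ t' : ℝ, g * (f t' : Matrix (Fin 2) (Fin 2) ℝ)
        = (f (-t') : Matrix (Fin 2) (Fin 2) ℝ) * g := by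
      intro t'
      obtain ⟨α, β, habt⟩ := comm2 hns (hcommH t')
      have hminv : (f (-t') : Matrix (Fin 2) (Fin 2) ℝ)
          = Matrix.trace ((f t' : Matrix.SpecialLinearGroup (Fin 2) ℝ)
            : Matrix (Fin 2) (Fin 2) ℝ) • 1
            - ((f t' : Matrix.SpecialLinearGroup (Fin 2) ℝ) : Matrix (Fin 2) (Fin 2) ℝ) := by
        rw [finv t', Matrix.SpecialLinearGroup.coe_inv, adj2]
      rw [hminv, habt]
      have htrm : Matrix.trace (α • (1 : Matrix (Fin 2) (Fin 2) ℝ) + β • hM)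
          = (2*α + β*τ) := by
        simp only [Matrix.trace_add, Matrix.trace_smul, Matrix.trace_one, smul_eq_mul,
          Fintype.card_fin, ← hτdef]
        push_cast
        ring
      rw [htrm]
      rw [mul_add, mul_smul_comm, mul_smul_comm, mul_one, hgh]
      simp only [sub_mul, add_mul, smul_mul_assoc, one_mul]
      module
    have key : ∀ t : ℝ, f t * G = G * f ((-1) * t) := by
      intro t
      apply hcoe
      rw [Matrix.SpecialLinearGroup.coe_mul, Matrix.SpecialLinearGroup.coe_mul]
      have hGg : (G : Matrix (Fin 2) (Fin 2) ℝ) = g := rfl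
      rw [hGg]
      have h1 := hkeyM ((-1)*t)
      rw [show -((-1:ℝ)*t) = t by ring] at h1
      exact h1.symm
    exact final_step ρ f hhom t₁ ht₁ G (-1) (by norm_num) (by norm_num) key
end

section
/- Let G be a topological abelian (additive) group and φ : ℝ → G a continuous additive group homomorphism, and consider the flow E_t(x) = x + φ(t) on G. Then for every x ∈ G, the orbit closure K = closure{x + φ(t) : t ∈ ℝ} is a minimal set for E: for every y ∈ K, the closure of {y + φ(t) : t ∈ ℝ} equals K, and hence every nonempty closed E-invariant subset of K equals K. In particular, for straight-line flows on tori, every orbit closure is a minimal set. -/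
/-- For the translation flow `E_t x = x + φ t` on a topological abelian
group `G` (`φ : ℝ → G` a continuous homomorphism), every orbit closure is a minimal set:
the orbit closure of every point of `K = closure {x + φ t}` equals `K`, and every
nonempty closed invariant subset of `K` equals `K`. -/
theorem translation_flow_orbit_closure_minimal {G : Type*} [AddCommGroup G]
    [TopologicalSpace G] [IsTopologicalAddGroup G]
    (φ : ℝ →+ G) (hφ : Continuous φ) (x : G) :
    (∀ y ∈ closure (Set.range fun t : ℝ => x + φ t),
      closure (Set.range fun t : ℝ => y + φ t) =
        closure (Set.range fun t : ℝ => x + φ t)) ∧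
    (∀ K' ⊆ closure (Set.range fun t : ℝ => x + φ t), K'.Nonempty → IsClosed K' →
      (∀ t : ℝ, (fun z => z + φ t) '' K' = K') →
      K' = closure (Set.range fun t : ℝ => x + φ t)) := by
  classical
  set S : AddSubgroup G := φ.range.topologicalClosure with hS
  have hSc : (S : Set G) = closure (Set.range φ) := rfl
  have hcl : ∀ z : G, closure (Set.range fun t : ℝ => z + φ t)
      = (z + ·) '' closure (Set.range φ) := by
    intro z
    have himg : (Set.range fun t : ℝ => z + φ t) = (z + ·) '' Set.range φ := by
      ext w
      constructor
      · rintro ⟨t, rfl⟩; exact ⟨φ t, ⟨t, rfl⟩, rfl⟩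
      · rintro ⟨c, ⟨t, rfl⟩, rfl⟩; exact ⟨t, rfl⟩
    rw [himg]
    exact ((Homeomorph.addLeft z).image_closure (Set.range ⇑φ)).symm
  have key : ∀ y ∈ closure (Set.range fun t : ℝ => x + φ t),
      closure (Set.range fun t : ℝ => y + φ t) =
        closure (Set.range fun t : ℝ => x + φ t) := by
    intro y hy
    rw [hcl] at hy
    obtain ⟨h, hh, rfl⟩ := hy
    rw [hcl, hcl]
    have hhS : h ∈ S := by rw [← hSc] at hh; exact hh
    ext z
    constructor
    · rintro ⟨c, hc, rfl⟩
      have hcS : c ∈ S := hc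
      refine ⟨h + c, S.add_mem hhS hcS, by beta_reduce; abel⟩
    · rintro ⟨c, hc, rfl⟩
      have hcS : c ∈ S := hc
      refine ⟨-h + c, S.add_mem (S.neg_mem hhS) hcS, by beta_reduce; abel⟩
  refine ⟨key, ?_⟩
  intro K' hK'sub hne hclosed hinv
  obtain ⟨y, hy⟩ := hne
  refine Set.Subset.antisymm hK'sub ?_
  have hyK := hK'sub hy
  rw [← key y hyK]
  apply closure_minimal ?_ hclosed
  rintro z ⟨t, rfl⟩
  rw [← hinv t]
  exact ⟨y, hy, rfl⟩
end
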